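/- Let ω be a nonzero complex number such that ω² has finite multiplicative order N, and set η = ω^{N²}. Let V be a finite-dimensional complex vector space and let A be a linear endomorphism of V such that A^N = c · id_V for some c ∈ ℂ with c ≠ −η. Then for every integer r, the endomorphism id_V + ω^{2r−1} · A is invertible. -/
import Mathlib

lemma aux_parity (ω : ℂ) (N : ℕ) (hN : 0 < N) (horder : orderOf (ω ^ 2) = N) :
    (-1 : ℂ)^N * ω^N = -(ω^(N^2)) := by
  have hω2 : (ω^2)^N = 1 := by rw [← horder]; exact pow_orderOf_eq_one _
  have hsq : (ω^N)^2 = 1 := by rw [← pow_mul, mul_comm, pow_mul, hω2]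
  rcases Nat.even_or_odd N with hE | hO
  · obtain ⟨m, hm⟩ := hE
    have hm2 : N = 2*m := by omega
    have hNsq : ω^(N^2) = 1 := by
      have h : N^2 = N*2*m := by rw [hm2]; ring
      rw [h, pow_mul, pow_mul, hsq, one_pow]
    have hor : ω^N = 1 ∨ ω^N = -1 := by
      rw [sq] at hsq; exact mul_self_eq_one_iff.mp hsq
    have hne : ω^N ≠ 1 := by
      intro h1
      have : (ω^2)^m = 1 := by rw [← pow_mul, ← hm2]; exact h1
      have hdvd : N ∣ m := horder ▸ orderOf_dvd_of_pow_eq_one this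
      have hm0 : 0 < m := by omega
      have := Nat.le_of_dvd hm0 hdvd
      omega
    rcases hor with h1 | h1
    · exact absurd h1 hne
    · rw [h1, hNsq, Even.neg_one_pow ⟨m, hm⟩]; ring
  · obtain ⟨m, hm⟩ := hO
    have hNsq : ω^(N^2) = ω^N := by
      have h : N^2 = N*(2*m) + N := by rw [hm]; ring
      rw [h, pow_add, pow_mul, pow_mul, hsq, one_pow, one_mul]
    rw [hNsq, Odd.neg_pow ⟨m, hm⟩, one_pow, neg_one_mul]

theorem stmt_8 (ω : ℂ) (hω : ω ≠ 0) (N : ℕ) (hN : 0 < N)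
    (horder : orderOf (ω ^ 2) = N)
    (V : Type*) [AddCommGroup V] [Module ℂ V] [FiniteDimensional ℂ V]
    (A : Module.End ℂ V) (c : ℂ) (hc : c ≠ -(ω ^ (N ^ 2)))
    (hA : A ^ N = c • (1 : Module.End ℂ V)) (r : ℤ) :
    IsUnit ((1 : Module.End ℂ V) + ω ^ (2 * r - 1) • A) := by
  have hω2 : (ω^2)^N = 1 := by rw [← horder]; exact pow_orderOf_eq_one _
  have h2N : ω^(2*N) = 1 := by rw [pow_mul]; exact hω2
  set z : ℂ := ω ^ (2*r - 1) with hz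
  -- key scalar fact
  have hzN : z ^ N * ω ^ N = 1 := by
    have h2N' : ω ^ ((2*N : ℕ) : ℤ) = 1 := by rw [zpow_natCast]; exact h2N
    rw [hz, ← zpow_natCast (ω ^ (2*r-1)) N, ← zpow_natCast ω N, ← zpow_mul,
      ← zpow_add₀ hω, show (2*r-1)*(N:ℤ) + N = (((2*N : ℕ) : ℤ)) * r by push_cast; ring,
      zpow_mul, h2N', one_zpow]
  set B : Module.End ℂ V := z • A with hB
  set d : ℂ := z ^ N * c with hd
  set t : ℂ := 1 - (-1:ℂ)^N * d with ht
  have hBN : B ^ N = d • (1 : Module.End ℂ V) := by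
    rw [hB, smul_pow, hA, smul_smul, hd]
  have hnegBN : (-B) ^ N = ((-1:ℂ)^N * d) • (1 : Module.End ℂ V) := by
    have hneg : -B = (-1:ℂ) • B := by simp
    rw [hneg, smul_pow, hBN, smul_smul]
  have ht0 : t ≠ 0 := by
    intro h0
    apply hc
    have he : (1:ℂ) = (-1:ℂ)^N * (z^N * c) := by
      rw [ht, hd] at h0
      have := sub_eq_zero.mp h0
      linear_combination this
    have h1 : (-1:ℂ)^N * (-1:ℂ)^N = 1 := by
      rw [← pow_add]; exact Even.neg_one_pow ⟨N, rfl⟩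
    have : c = (-1:ℂ)^N * ω^N := by
      calc c = ((-1:ℂ)^N * (-1:ℂ)^N) * (z^N * ω^N) * c := by rw [h1, hzN]; ring
        _ = (-1:ℂ)^N * ω^N * ((-1:ℂ)^N * (z^N * c)) := by ring
        _ = (-1:ℂ)^N * ω^N := by rw [← he, mul_one]
    rw [this, aux_parity ω N hN horder]
  set S : Module.End ℂ V := ∑ i ∈ Finset.range N, (-B)^i with hS
  have h1 : S * (1 + B) = t • (1 : Module.End ℂ V) := by
    have hg := geom_sum_mul (-B) N
    have hstep : S * (1 + B) = 1 - (-B)^N := by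
      have hh : S * (1 + B) = -(S * (-B - 1)) := by noncomm_ring
      rw [hh, hS, hg]; abel
    rw [hstep, hnegBN, ht, sub_smul, one_smul]
  have h2 : (1 + B) * S = t • (1 : Module.End ℂ V) := by
    have hg := mul_geom_sum (-B) N
    have hstep : (1 + B) * S = 1 - (-B)^N := by
      have hh : (1 + B) * S = -((-B - 1) * S) := by noncomm_ring
      rw [hh, hS, hg]; abel
    rw [hstep, hnegBN, ht, sub_smul, one_smul]
  refine isUnit_iff_exists.mpr ⟨t⁻¹ • S, ?_, ?_⟩
  · rw [mul_smul_comm, h2, smul_smul, inv_mul_cancel₀ ht0, one_smul]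
  · rw [smul_mul_assoc, h1, smul_smul, inv_mul_cancel₀ ht0, one_smul]
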